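/- Let p(x) be a monic univariate real polynomial of degree d ≥ 1. Then for any ε > 0, the probability under a standard Gaussian x ~ N(0,1) that |p(x)| < ε is less than d·ε^{1/d}. -/

import Mathlib

open MeasureTheory ProbabilityTheory Polynomial Real
open scoped NNReal ENNReal

private lemma multiset_pow_card_le_prod {t : ℝ} (ht : 0 ≤ t) (s : Multiset ℝ)
    (h : ∀ z ∈ s, t ≤ z) : t ^ Multiset.card s ≤ s.prod := by
  induction s using Multiset.induction with
  | empty => simp
  | cons a s ih =>
    simp only [Multiset.card_cons, Multiset.prod_cons, pow_succ']
    have hprod : t ^ Multiset.card s ≤ s.prod := ih (fun z hz => h z (Multiset.mem_cons_of_mem hz))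
    have ha : t ≤ a := h a (Multiset.mem_cons_self a s)
    exact mul_le_mul ha hprod (pow_nonneg ht _) (ht.trans ha)

private lemma gaussian_interval_bound (a t : ℝ) (ht : 0 ≤ t) :
    (gaussianReal 0 1) {x : ℝ | |x - a| < t}
      ≤ ENNReal.ofReal ((Real.sqrt (2 * π))⁻¹ * (2 * t)) := by
  have hset : {x : ℝ | |x - a| < t} = Set.Ioo (a - t) (a + t) := by
    ext x
    simp only [Set.mem_setOf_eq, Set.mem_Ioo, abs_lt]
    constructor <;> intro ⟨h1, h2⟩ <;> constructor <;> linarith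
  rw [hset, gaussianReal_apply 0 one_ne_zero]
  have hbound : ∀ x : ℝ, gaussianPDF 0 1 x ≤ ENNReal.ofReal (Real.sqrt (2 * π))⁻¹ := by
    intro x
    rw [gaussianPDF]
    apply ENNReal.ofReal_le_ofReal
    rw [gaussianPDFReal]
    have h1 : Real.exp (-(x - 0) ^ 2 / (2 * (1 : ℝ≥0))) ≤ 1 := by
      rw [Real.exp_le_one_iff]
      have : (0:ℝ) ≤ (x - 0) ^ 2 := sq_nonneg _
      simp only [NNReal.coe_one]
      nlinarith
    calc (Real.sqrt (2 * π * (1:ℝ≥0)))⁻¹ * Real.exp (-(x - 0) ^ 2 / (2 * (1:ℝ≥0)))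
        ≤ (Real.sqrt (2 * π * (1:ℝ≥0)))⁻¹ * 1 := by
          apply mul_le_mul_of_nonneg_left h1
          positivity
      _ = (Real.sqrt (2 * π))⁻¹ := by simp
  calc ∫⁻ x in Set.Ioo (a - t) (a + t), gaussianPDF 0 1 x
      ≤ ∫⁻ _ in Set.Ioo (a - t) (a + t), ENNReal.ofReal (Real.sqrt (2 * π))⁻¹ :=
        lintegral_mono fun x => hbound x
    _ = ENNReal.ofReal (Real.sqrt (2 * π))⁻¹ * volume (Set.Ioo (a - t) (a + t)) := by
        rw [setLIntegral_const]
    _ = ENNReal.ofReal ((Real.sqrt (2 * π))⁻¹ * (2 * t)) := by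
        rw [Real.volume_Ioo, ← ENNReal.ofReal_mul (by positivity)]
        congr 1
        ring_nf
    _ ≤ ENNReal.ofReal ((Real.sqrt (2 * π))⁻¹ * (2 * t)) := le_rfl

/-- Anticoncentration of a monic univariate polynomial of degree `d ≥ 1` under a
standard Gaussian: `Pr_{x ∼ N(0,1)}[|p(x)| < ε] < d·ε^{1/d}`. -/
theorem gaussian_anticoncentration_univariate
    (p : Polynomial ℝ) (hmonic : p.Monic) (d : ℕ) (hd : 1 ≤ d)
    (hdeg : p.natDegree = d) (ε : ℝ) (hε : 0 < ε) :
    ((gaussianReal 0 1) {x : ℝ | |p.eval x| < ε}).toReal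
      < (d : ℝ) * ε ^ ((1 : ℝ) / d) := by
  have hd0 : (d : ℝ) ≠ 0 := Nat.cast_ne_zero.mpr (by omega)
  set t : ℝ := ε ^ ((1 : ℝ) / d) with htdef
  have ht : 0 < t := Real.rpow_pos_of_pos hε _
  have htd : t ^ d = ε := by
    rw [htdef, ← Real.rpow_natCast (ε ^ ((1:ℝ)/d)) d, ← Real.rpow_mul hε.le]
    rw [one_div, inv_mul_cancel₀ hd0, Real.rpow_one]
  -- factor over ℂ
  set q : Polynomial ℂ := p.map (algebraMap ℝ ℂ) with hq
  have hqm : q.Monic := hmonic.map _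
  have hsp : q.Splits := IsAlgClosed.splits q
  have hcard : Multiset.card q.roots = d := by
    rw [Polynomial.splits_iff_card_roots.mp hsp, hq, p.natDegree_map (algebraMap ℝ ℂ), hdeg]
  have heval : ∀ x : ℝ, |p.eval x|
      = ((q.roots.map (fun z => ‖(x : ℂ) - z‖)).prod) := by
    intro x
    have h1 : ((p.eval x : ℝ) : ℂ) = q.eval (x : ℂ) := by
      rw [hq, Polynomial.eval_map]
      exact (Polynomial.eval₂_at_apply (algebraMap ℝ ℂ) x).symm
    have h2 : q.eval (x : ℂ) = (q.roots.map (fun z => (x : ℂ) - z)).prod := by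
      conv_lhs => rw [hsp.eq_prod_roots_of_monic hqm]
      rw [Polynomial.eval_multiset_prod, Multiset.map_map]
      simp
    have := congrArg (normHom : ℂ →*₀ ℝ) (h1.trans h2)
    rw [map_multiset_prod, Multiset.map_map] at this
    simpa [Function.comp_def] using this
  -- coverage
  have hcover : {x : ℝ | |p.eval x| < ε}
      ⊆ ⋃ z ∈ q.roots.toFinset, {x : ℝ | |x - z.re| < t} := by
    intro x hx
    simp only [Set.mem_setOf_eq] at hx
    have hex : ∃ z ∈ q.roots, ‖(x : ℂ) - z‖ < t := by
      by_contra hcon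
      push_neg at hcon
      have hle : t ^ d ≤ (q.roots.map (fun z => ‖(x : ℂ) - z‖)).prod := by
        rw [← hcard, ← Multiset.card_map (fun z => ‖(x : ℂ) - z‖) q.roots]
        apply multiset_pow_card_le_prod ht.le
        intro y hy
        obtain ⟨z, hz, rfl⟩ := Multiset.mem_map.mp hy
        exact hcon z hz
      rw [htd] at hle
      exact absurd (heval x ▸ hx) (not_lt.mpr hle)
    obtain ⟨z, hz, hzt⟩ := hex
    refine Set.mem_biUnion (Multiset.mem_toFinset.mpr hz) ?_
    simp only [Set.mem_setOf_eq]
    have : |((x : ℂ) - z).re| ≤ ‖(x : ℂ) - z‖ := Complex.abs_re_le_norm _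
    simp only [Complex.sub_re, Complex.ofReal_re] at this
    exact this.trans_lt hzt
  -- measure bound
  set C : ℝ≥0∞ := ENNReal.ofReal ((Real.sqrt (2 * π))⁻¹ * (2 * t)) with hC
  have hmeas : (gaussianReal 0 1) {x : ℝ | |p.eval x| < ε} ≤ (d : ℝ≥0∞) * C := by
    calc (gaussianReal 0 1) {x : ℝ | |p.eval x| < ε}
        ≤ (gaussianReal 0 1) (⋃ z ∈ q.roots.toFinset, {x : ℝ | |x - z.re| < t}) :=
          measure_mono hcover
      _ ≤ ∑ z ∈ q.roots.toFinset, (gaussianReal 0 1) {x : ℝ | |x - z.re| < t} :=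
          measure_biUnion_finset_le _ _
      _ ≤ ∑ _z ∈ q.roots.toFinset, C :=
          Finset.sum_le_sum fun z _ => gaussian_interval_bound z.re t ht.le
      _ = (q.roots.toFinset.card : ℝ≥0∞) * C := by
          rw [Finset.sum_const, nsmul_eq_mul]
      _ ≤ (d : ℝ≥0∞) * C := by
          apply mul_le_mul_left
          exact_mod_cast Nat.cast_le.mpr (hcard ▸ q.roots.toFinset_card_le)
  have hCt : C < ENNReal.ofReal t := by
    rw [hC]
    apply ENNReal.ofReal_lt_ofReal_iff ht |>.mpr
    have hsqrt : (2 : ℝ) < Real.sqrt (2 * π) := by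
      nlinarith [Real.sq_sqrt (by positivity : (0:ℝ) ≤ 2*π), Real.sqrt_nonneg (2*π),
        Real.pi_gt_three]
    have hpos : (0:ℝ) < Real.sqrt (2 * π) := by linarith
    rw [inv_mul_eq_div, div_lt_iff₀ hpos]
    nlinarith
  have hlt : (gaussianReal 0 1) {x : ℝ | |p.eval x| < ε} < ENNReal.ofReal ((d : ℝ) * t) := by
    calc (gaussianReal 0 1) {x : ℝ | |p.eval x| < ε}
        ≤ (d : ℝ≥0∞) * C := hmeas
      _ < (d : ℝ≥0∞) * ENNReal.ofReal t := by
          rw [ENNReal.mul_lt_mul_iff_right (by exact_mod_cast (by omega : d ≠ 0))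
            (ENNReal.natCast_ne_top d)]
          exact hCt
      _ = ENNReal.ofReal ((d : ℝ) * t) := by
          rw [ENNReal.ofReal_mul (by positivity)]
          congr 1
          exact (ENNReal.ofReal_natCast d).symm
  exact ENNReal.toReal_lt_of_lt_ofReal hlt
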